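/- Suppose condition (I¹_ρ) holds for some ρ > 0: there exists a finite positive Borel measure dA^ρ on [0,1], with α^ρ[u] := ∫₀¹ u(t) dA^ρ(t) and 𝒦^ρ(s) := ∫₀¹ k(t,s) dA^ρ(t), such that α^ρ[γ] < 1, H[u] ≤ α^ρ[u] for every u ∈ K with ‖u‖ = ρ, and f^{0,ρ} · sup_{t∈[0,1]} { γ(t)/(1−α^ρ[γ]) · ∫₀¹ 𝒦^ρ(s) g(s) ds + ∫₀¹ k(t,s) g(s) ds } < 1, where f^{0,ρ} := ess sup { f(t,u)/ρ : t ∈ [0,1], 0 ≤ u ≤ ρ }. Then for every u ∈ K with ‖u‖ = ρ and every real μ ≥ 1 one has μ·u ≠ Tu. -/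

import Mathlib

open MeasureTheory Set

/-- Supremum norm of `u` on `[0,1]`. -/
noncomputable def nrm (u : ℝ → ℝ) : ℝ := sSup ((fun t => |u t|) '' Icc (0:ℝ) 1)

/-- Minimum (infimum) of `u` on `[a,b]`. -/
noncomputable def minOnAB (u : ℝ → ℝ) (a b : ℝ) : ℝ := sInf (u '' Icc a b)

/-- The perturbed Hammerstein operator `Tu(t) = γ(t)H[u] + ∫₀¹ k(t,s)g(s)f(s,u(s)) ds`. -/
noncomputable def Tham (k : ℝ → ℝ → ℝ) (g : ℝ → ℝ) (f : ℝ → ℝ → ℝ) (γ : ℝ → ℝ)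
    (H : (ℝ → ℝ) → ℝ) (u : ℝ → ℝ) (t : ℝ) : ℝ :=
  γ t * H u + ∫ s in (0:ℝ)..1, k t s * g s * f s (u s)

/-- Condition (I¹_ρ) for non-negative kernels (with `f^{0,ρ}`). -/
def CondI1B (k : ℝ → ℝ → ℝ) (g : ℝ → ℝ) (f : ℝ → ℝ → ℝ) (γ : ℝ → ℝ)
    (H : (ℝ → ℝ) → ℝ) (K : Set (ℝ → ℝ)) (ρ : ℝ) : Prop :=
  ∃ μA : Measure ℝ, IsFiniteMeasure μA ∧ μA ((Icc (0:ℝ) 1)ᶜ) = 0 ∧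
    (∫ t, γ t ∂μA) < 1 ∧
    (∀ u ∈ K, nrm u = ρ → H u ≤ ∫ t, u t ∂μA) ∧
    ∃ fb : ℝ,
      (∀ᵐ t ∂(volume.restrict (Icc (0:ℝ) 1)), ∀ u : ℝ, 0 ≤ u → u ≤ ρ → f t u ≤ fb * ρ) ∧
      fb * sSup ((fun t => γ t / (1 - ∫ t', γ t' ∂μA) *
          (∫ s in (0:ℝ)..1, (∫ t', k t' s ∂μA) * g s) +
          ∫ s in (0:ℝ)..1, k t s * g s) '' Icc (0:ℝ) 1) < 1

theorem stmt3
    (k : ℝ → ℝ → ℝ) (g : ℝ → ℝ) (f : ℝ → ℝ → ℝ) (Φ γ : ℝ → ℝ) (a b c₁ c₂ c : ℝ)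
    (H : (ℝ → ℝ) → ℝ) (K : Set (ℝ → ℝ))
    (hk_meas : Measurable (Function.uncurry k))
    (hk_nonneg : ∀ t ∈ Icc (0:ℝ) 1, ∀ s ∈ Icc (0:ℝ) 1, 0 ≤ k t s)
    (hk_cont : ∀ τ ∈ Icc (0:ℝ) 1, ∀ᵐ s ∂(volume.restrict (Icc (0:ℝ) 1)),
      Filter.Tendsto (fun t => |k t s - k τ s|) (nhdsWithin τ (Icc (0:ℝ) 1)) (nhds 0))
    (ha : 0 ≤ a) (hab : a ≤ b) (hb : b ≤ 1)
    (hΦ_meas : Measurable Φ)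
    (hΦ_bdd : ∃ C, ∀ᵐ s ∂(volume.restrict (Icc (0:ℝ) 1)), |Φ s| ≤ C)
    (hc₁ : c₁ ∈ Ioc (0:ℝ) 1)
    (hkΦ_up : ∀ t ∈ Icc (0:ℝ) 1, ∀ᵐ s ∂(volume.restrict (Icc (0:ℝ) 1)), k t s ≤ Φ s)
    (hkΦ_low : ∀ t ∈ Icc a b, ∀ᵐ s ∂(volume.restrict (Icc (0:ℝ) 1)), c₁ * Φ s ≤ k t s)
    (hg_meas : Measurable g)
    (hg_nonneg : ∀ᵐ s ∂(volume.restrict (Icc (0:ℝ) 1)), 0 ≤ g s)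
    (hgΦ_int : IntegrableOn (fun s => g s * Φ s) (Icc (0:ℝ) 1))
    (hΦg_pos : 0 < ∫ s in a..b, Φ s * g s)
    (hf_meas : ∀ u : ℝ, Measurable (fun t => f t u))
    (hf_cont : ∀ᵐ t ∂(volume.restrict (Icc (0:ℝ) 1)), ContinuousOn (f t) (Ici 0))
    (hf_nonneg : ∀ t u : ℝ, 0 ≤ u → 0 ≤ f t u)
    (hf_bdd : ∀ r > 0, ∃ C, ∀ᵐ t ∂(volume.restrict (Icc (0:ℝ) 1)), ∀ u ∈ Icc (0:ℝ) r, f t u ≤ C)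
    (hγ_cont : ContinuousOn γ (Icc (0:ℝ) 1))
    (hγ_nonneg : ∀ t ∈ Icc (0:ℝ) 1, 0 ≤ γ t)
    (hc₂ : c₂ ∈ Ioc (0:ℝ) 1)
    (hγ_low : ∀ t ∈ Icc a b, c₂ * nrm γ ≤ γ t)
    (hc : c = min c₁ c₂)
    (hK : K = {u : ℝ → ℝ | ContinuousOn u (Icc (0:ℝ) 1) ∧
      (∀ t ∈ Icc (0:ℝ) 1, 0 ≤ u t) ∧ c * nrm u ≤ minOnAB u a b})
    (hH_nonneg : ∀ u ∈ K, 0 ≤ H u)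
    (hH_cont : ∀ u ∈ K, ∀ ε > 0, ∃ δ > 0, ∀ v ∈ K,
      nrm (fun t => u t - v t) < δ → |H u - H v| < ε)
    (hH_bdd : ∀ M : ℝ, ∃ M', ∀ u ∈ K, nrm u ≤ M → H u ≤ M')
    (ρ : ℝ) (hρ : 0 < ρ) (hI1 : CondI1B k g f γ H K ρ) :
    ∀ u ∈ K, nrm u = ρ → ∀ μ : ℝ, 1 ≤ μ →
      ¬ (∀ t ∈ Icc (0:ℝ) 1, μ * u t = Tham k g f γ H u t) := by
  intro u hu hnrm μ hμ hEq
  obtain ⟨μA, hfin, hnull, hαγlt, hHle, fb, hfb, hlt⟩ := hI1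
  -- notation
  set I : Set ℝ := Icc (0:ℝ) 1 with hIdef
  set ν : Measure ℝ := volume.restrict (Ioc (0:ℝ) 1) with hνdef
  have h01 : (0:ℝ) ≤ 1 := zero_le_one
  have h0I : (0:ℝ) ∈ I := Set.left_mem_Icc.mpr h01
  have hmemI : ∀ᵐ t ∂μA, t ∈ I := by
    rw [Filter.eventually_iff, mem_ae_iff]
    simpa using hnull
  have hrA : μA.restrict I = μA := Measure.restrict_eq_self_of_ae_mem hmemI
  -- membership facts for u
  have hu' := hu
  rw [hK] at hu'
  obtain ⟨hu_cont, hu_nonneg, -⟩ := hu'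
  have hbddu : BddAbove ((fun t => |u t|) '' I) :=
    (isCompact_Icc.image_of_continuousOn hu_cont.abs).bddAbove
  have hule : ∀ t ∈ I, u t ≤ ρ := by
    intro t ht
    calc u t ≤ |u t| := le_abs_self _
      _ ≤ nrm u := le_csSup hbddu ⟨t, ht, rfl⟩
      _ = ρ := hnrm
  -- fb * ρ ≥ 0
  have hfbρ : 0 ≤ fb * ρ := by
    have hne : (volume.restrict I) ≠ 0 := by
      intro h
      have h1 : (volume.restrict I) I = 0 := by rw [h]; rfl
      rw [Measure.restrict_apply_self] at h1
      simp [hIdef, Real.volume_Icc] at h1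
    have : Filter.NeBot (ae (volume.restrict I)) := ae_neBot.mpr hne
    obtain ⟨t, ht⟩ := hfb.exists
    exact le_trans (hf_nonneg t 0 le_rfl) (ht 0 le_rfl hρ.le)
  have hfb0 : 0 ≤ fb := by
    by_contra hcon
    push_neg at hcon
    nlinarith
  -- nonnegativity of Φ a.e.
  have hg_nonneg' : ∀ᵐ s ∂ν, 0 ≤ g s :=
    ae_restrict_of_ae_restrict_of_subset Ioc_subset_Icc_self hg_nonneg
  have hmemIoc : ∀ᵐ s ∂ν, s ∈ Ioc (0:ℝ) 1 := ae_restrict_mem measurableSet_Ioc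
  -- integrability of g·Φ on Ioc
  have hgΦIoc : IntegrableOn (fun s => g s * Φ s) (Ioc (0:ℝ) 1) :=
    hgΦ_int.mono_set Ioc_subset_Icc_self
  -- measurability of k t ·
  have hk_t : ∀ t, Measurable fun s => k t s := fun t =>
    hk_meas.comp (measurable_const.prodMk measurable_id)
  have hk_s : ∀ s, Measurable fun t => k t s := fun s =>
    hk_meas.comp (measurable_id.prodMk measurable_const)
  -- a.e. bound  k t s * g s ≤ g s * Φ s on Ioc, for t ∈ I
  have hkg_ae : ∀ t ∈ I, ∀ᵐ s ∂ν,
      0 ≤ k t s * g s ∧ k t s * g s ≤ g s * Φ s := by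
    intro t ht
    filter_upwards [hmemIoc, hg_nonneg',
      ae_restrict_of_ae_restrict_of_subset Ioc_subset_Icc_self (hkΦ_up t ht)] with s hs hgs hks
    have hsI : s ∈ I := Ioc_subset_Icc_self hs
    have hk0 : 0 ≤ k t s := hk_nonneg t ht s hsI
    constructor
    · exact mul_nonneg hk0 hgs
    · calc k t s * g s ≤ Φ s * g s := mul_le_mul_of_nonneg_right hks hgs
        _ = g s * Φ s := mul_comm _ _
  have hkg_int : ∀ t ∈ I, IntegrableOn (fun s => k t s * g s) (Ioc (0:ℝ) 1) := by
    intro t ht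
    refine Integrable.mono' hgΦIoc ((hk_t t).mul hg_meas).aestronglyMeasurable ?_
    filter_upwards [hkg_ae t ht] with s hs
    rw [Real.norm_eq_abs, abs_of_nonneg hs.1]
    exact hs.2
  -- the two t-functions
  set F : ℝ → ℝ := fun t => ∫ s in (0:ℝ)..1, k t s * g s * f s (u s) with hFdef
  set G : ℝ → ℝ := fun t => ∫ s in (0:ℝ)..1, k t s * g s with hGdef
  have hG_eq : ∀ t, G t = ∫ s, k t s * g s ∂ν := fun t =>
    intervalIntegral.integral_of_le h01
  have hG_nonneg : ∀ t ∈ I, 0 ≤ G t := by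
    intro t ht
    rw [hG_eq t]
    refine integral_nonneg_of_ae ?_
    filter_upwards [hkg_ae t ht] with s hs using hs.1
  -- pointwise bound on f ∘ u
  have hfu_ae : ∀ᵐ s ∂ν, f s (u s) ≤ fb * ρ ∧ 0 ≤ f s (u s) := by
    filter_upwards [hmemIoc,
      ae_restrict_of_ae_restrict_of_subset Ioc_subset_Icc_self hfb] with s hs hfs
    have hsI : s ∈ I := Ioc_subset_Icc_self hs
    exact ⟨hfs (u s) (hu_nonneg s hsI) (hule s hsI), hf_nonneg s (u s) (hu_nonneg s hsI)⟩
  -- Step A : F t ≤ fb ρ G t on I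
  have hFG : ∀ t ∈ I, F t ≤ fb * ρ * G t := by
    intro t ht
    have hF_eq : F t = ∫ s, k t s * g s * f s (u s) ∂ν :=
      intervalIntegral.integral_of_le h01
    by_cases hint : Integrable (fun s => k t s * g s * f s (u s)) ν
    · rw [hF_eq]
      calc ∫ s, k t s * g s * f s (u s) ∂ν
          ≤ ∫ s, fb * ρ * (k t s * g s) ∂ν := by
            refine integral_mono_ae hint ((hkg_int t ht).const_mul _) ?_
            filter_upwards [hkg_ae t ht, hfu_ae] with s h1 h2
            calc k t s * g s * f s (u s) ≤ k t s * g s * (fb * ρ) :=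
                  mul_le_mul_of_nonneg_left h2.1 h1.1
              _ = fb * ρ * (k t s * g s) := by ring
        _ = fb * ρ * ∫ s, k t s * g s ∂ν := integral_const_mul _ _
        _ = fb * ρ * G t := by rw [hG_eq t]
    · rw [hF_eq, integral_undef hint]
      exact mul_nonneg hfbρ (hG_nonneg t ht)
  -- integrability wrt μA
  have hγAESM : AEStronglyMeasurable γ μA := by
    rw [← hrA]; exact hγ_cont.aestronglyMeasurable measurableSet_Icc
  obtain ⟨Cγ, hCγ⟩ := isCompact_Icc.exists_bound_of_continuousOn hγ_cont
  have hγ_int : Integrable γ μA := by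
    refine Integrable.mono' (integrable_const Cγ) hγAESM ?_
    filter_upwards [hmemI] with t ht using hCγ t ht
  have huAESM : AEStronglyMeasurable u μA := by
    rw [← hrA]; exact hu_cont.aestronglyMeasurable measurableSet_Icc
  have hu_int : Integrable u μA := by
    refine Integrable.mono' (integrable_const ρ) huAESM ?_
    filter_upwards [hmemI] with t ht
    rw [Real.norm_eq_abs, abs_of_nonneg (hu_nonneg t ht)]
    exact hule t ht
  -- the equation, a.e. wrt μA
  have heqae : F =ᵐ[μA] fun t => μ * u t - γ t * H u := by
    filter_upwards [hmemI] with t ht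
    have h1 : μ * u t = γ t * H u + F t := hEq t ht
    linarith
  have hFint : Integrable F μA :=
    ((hu_int.const_mul μ).sub (hγ_int.mul_const (H u))).congr heqae.symm
  have hFval : ∫ t, F t ∂μA = μ * (∫ t, u t ∂μA) - (∫ t, γ t ∂μA) * H u := by
    rw [integral_congr_ae heqae,
      integral_sub (hu_int.const_mul μ) (hγ_int.mul_const (H u)),
      integral_const_mul, integral_mul_const]
  -- measurability and boundedness of G
  have hG_meas : Measurable G := by
    have hGeq2 : G = fun t => ∫ s, k t s * g s ∂ν := funext hG_eq
    rw [hGeq2]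
    have hsm : StronglyMeasurable (Function.uncurry fun t s => k t s * g s) :=
      (hk_meas.mul (hg_meas.comp measurable_snd)).stronglyMeasurable
    exact hsm.integral_prod_right.measurable
  have hG_le : ∀ t ∈ I, G t ≤ ∫ s, g s * Φ s ∂ν := by
    intro t ht
    rw [hG_eq t]
    refine integral_mono_ae (hkg_int t ht) hgΦIoc ?_
    filter_upwards [hkg_ae t ht] with s hs using hs.2
  have hGA_int : Integrable G μA := by
    refine Integrable.mono' (integrable_const (∫ s, g s * Φ s ∂ν))
      hG_meas.aestronglyMeasurable ?_
    filter_upwards [hmemI] with t ht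
    rw [Real.norm_eq_abs, abs_of_nonneg (hG_nonneg t ht)]
    exact hG_le t ht
  -- Fubini
  have hprod_meas : Measurable (Function.uncurry fun t s => k t s * g s) :=
    hk_meas.mul (hg_meas.comp measurable_snd)
  have hprod : Integrable (Function.uncurry fun t s => k t s * g s) (μA.prod ν) := by
    refine ⟨hprod_meas.aestronglyMeasurable, ?_⟩
    rw [hasFiniteIntegral_def]
    have hL : ∫⁻ p, ‖(Function.uncurry fun t s => k t s * g s) p‖ₑ ∂(μA.prod ν)
        = ∫⁻ t, ∫⁻ s, ‖k t s * g s‖ₑ ∂ν ∂μA := by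
      exact lintegral_prod _ (hprod_meas.enorm.aemeasurable)
    rw [hL]
    set C : ENNReal := ∫⁻ s, ‖g s * Φ s‖ₑ ∂ν with hCdef
    have hC : C < ⊤ := by
      have := hgΦIoc.hasFiniteIntegral
      rwa [hasFiniteIntegral_def] at this
    have hbound : ∀ᵐ t ∂μA, (∫⁻ s, ‖k t s * g s‖ₑ ∂ν) ≤ C := by
      filter_upwards [hmemI] with t ht
      refine lintegral_mono_ae ?_
      filter_upwards [hkg_ae t ht] with s hs
      have h1 : ‖k t s * g s‖ ≤ ‖g s * Φ s‖ := by
        rw [Real.norm_eq_abs, Real.norm_eq_abs, abs_of_nonneg hs.1]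
        exact le_trans hs.2 (le_abs_self _)
      exact enorm_le_iff_norm_le.mpr h1
    calc ∫⁻ t, ∫⁻ s, ‖k t s * g s‖ₑ ∂ν ∂μA ≤ ∫⁻ _, C ∂μA := lintegral_mono_ae hbound
      _ = C * μA univ := lintegral_const C
      _ < ⊤ := ENNReal.mul_lt_top hC (measure_lt_top μA univ)
  have hswap : ∫ t, G t ∂μA = ∫ s in (0:ℝ)..1, (∫ t', k t' s ∂μA) * g s := by
    have h1 : ∫ t, G t ∂μA = ∫ t, ∫ s, k t s * g s ∂ν ∂μA :=
      integral_congr_ae (Filter.Eventually.of_forall hG_eq)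
    rw [h1, integral_integral_swap hprod, intervalIntegral.integral_of_le h01]
    refine integral_congr_ae (Filter.Eventually.of_forall fun s => ?_)
    exact integral_mul_const (g s) fun t => k t s
  -- abbreviations
  set αγ : ℝ := ∫ t, γ t ∂μA with hαγdef
  set αu : ℝ := ∫ t, u t ∂μA with hαudef
  set IK : ℝ := ∫ s in (0:ℝ)..1, (∫ t', k t' s ∂μA) * g s with hIKdef
  set S : ℝ := sSup ((fun t => γ t / (1 - αγ) * IK + ∫ s in (0:ℝ)..1, k t s * g s) '' I)
    with hSdef
  have h1αγ : 0 < 1 - αγ := by linarith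
  -- ∫ F ≤ fb ρ IK
  have hFle : ∫ t, F t ∂μA ≤ fb * ρ * IK := by
    calc ∫ t, F t ∂μA ≤ ∫ t, fb * ρ * G t ∂μA := by
          refine integral_mono_ae hFint (hGA_int.const_mul _) ?_
          filter_upwards [hmemI] with t ht using hFG t ht
      _ = fb * ρ * ∫ t, G t ∂μA := integral_const_mul _ _
      _ = fb * ρ * IK := by rw [hswap]
  -- bound on H u
  have hαu0 : 0 ≤ αu := by
    refine integral_nonneg_of_ae ?_
    filter_upwards [hmemI] with t ht using hu_nonneg t ht
  have hHu_le : H u * (1 - αγ) ≤ fb * ρ * IK := by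
    have h1 : H u ≤ αu := hHle u hu hnrm
    have h2 : αu ≤ μ * αu := le_mul_of_one_le_left hαu0 hμ
    have h3 : μ * αu = αγ * H u + ∫ t, F t ∂μA := by
      rw [hFval]; ring
    nlinarith
  have hHub : H u ≤ fb * ρ * IK / (1 - αγ) := (le_div_iff₀ h1αγ).mpr hHu_le
  -- IK ≥ 0
  have hIK0 : 0 ≤ IK := by
    rw [hIKdef, intervalIntegral.integral_of_le h01]
    refine integral_nonneg_of_ae ?_
    filter_upwards [hmemIoc, hg_nonneg'] with s hs hgs
    refine mul_nonneg (integral_nonneg_of_ae ?_) hgs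
    filter_upwards [hmemI] with t ht using hk_nonneg t ht s (Ioc_subset_Icc_self hs)
  -- boundedness of the sup-set
  have hSbdd : BddAbove ((fun t => γ t / (1 - αγ) * IK + ∫ s in (0:ℝ)..1, k t s * g s) '' I) := by
    refine ⟨Cγ / (1 - αγ) * IK + ∫ s, g s * Φ s ∂ν, ?_⟩
    rintro x ⟨t, ht, rfl⟩
    have h1 : γ t ≤ Cγ := le_trans (le_abs_self _) (Real.norm_eq_abs (γ t) ▸ hCγ t ht)
    have h2 : γ t / (1 - αγ) ≤ Cγ / (1 - αγ) := by
      exact div_le_div_of_nonneg_right h1 h1αγ.le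
    have h3 : (∫ s in (0:ℝ)..1, k t s * g s) ≤ ∫ s, g s * Φ s ∂ν := hG_le t ht
    have h4 : γ t / (1 - αγ) * IK ≤ Cγ / (1 - αγ) * IK :=
      mul_le_mul_of_nonneg_right h2 hIK0
    exact add_le_add h4 h3
  -- final pointwise bound
  have hfinal : ∀ t ∈ I, u t ≤ fb * S * ρ := by
    intro t ht
    have heqt : μ * u t = γ t * H u + F t := hEq t ht
    have h1 : u t ≤ μ * u t := le_mul_of_one_le_left (hu_nonneg t ht) hμ
    have h2 : γ t * H u ≤ γ t * (fb * ρ * IK / (1 - αγ)) :=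
      mul_le_mul_of_nonneg_left hHub (hγ_nonneg t ht)
    have h3 : F t ≤ fb * ρ * G t := hFG t ht
    have h4 : γ t / (1 - αγ) * IK + G t ≤ S := le_csSup hSbdd ⟨t, ht, rfl⟩
    have h5 : γ t * (fb * ρ * IK / (1 - αγ)) + fb * ρ * G t
        = fb * ρ * (γ t / (1 - αγ) * IK + G t) := by
      field_simp
    have h6 : fb * ρ * (γ t / (1 - αγ) * IK + G t) ≤ fb * ρ * S :=
      mul_le_mul_of_nonneg_left h4 hfbρ
    calc u t ≤ μ * u t := h1
      _ = γ t * H u + F t := heqt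
      _ ≤ γ t * (fb * ρ * IK / (1 - αγ)) + fb * ρ * G t := add_le_add h2 h3
      _ = fb * ρ * (γ t / (1 - αγ) * IK + G t) := h5
      _ ≤ fb * ρ * S := h6
      _ = fb * S * ρ := by ring
  -- contradiction
  have hnrm_le : nrm u ≤ fb * S * ρ := by
    refine csSup_le ⟨|u 0|, ⟨0, h0I, rfl⟩⟩ ?_
    rintro x ⟨t, ht, rfl⟩
    show |u t| ≤ fb * S * ρ
    rw [abs_of_nonneg (hu_nonneg t ht)]
    exact hfinal t ht
  have hfinal2 : fb * S * ρ < ρ := by nlinarith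
  rw [hnrm] at hnrm_le
  linarith
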